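/- Let (u, v, φ) be a local solution on [0,T] of the hyperbolic–parabolic chemotaxis system on a network. Then there exists a constant C > 0, depending only on the parameters of the problem, such that Σ_i ( sup_{t∈[0,T]} ‖∂_{xx} φ_i(t)‖₂² + sup_{t∈[0,T]} ‖∂_x φ_i(t)‖₂² ) ≤ C Σ_i ( sup_{t∈[0,T]} ‖∂_t φ_i(t)‖₂² + sup_{t∈[0,T]} ‖u_i(t)‖₂² ). -/

import Mathlib

open Finset intervalIntegral MeasureTheory

noncomputable section

/-! ### Partial derivatives (functions of time and space are written `f t x`) -/

/-- Spatial partial derivative `∂_x f` at `(t, x)`. -/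
def pdx (f : ℝ → ℝ → ℝ) (t x : ℝ) : ℝ := deriv (f t) x

/-- Time partial derivative `∂_t f` at `(t, x)`. -/
def pdt (f : ℝ → ℝ → ℝ) (t x : ℝ) : ℝ := deriv (fun s => f s x) t

/-- Second spatial derivative `∂_{xx} f` at `(t, x)`. -/
def pdxx (f : ℝ → ℝ → ℝ) (t x : ℝ) : ℝ := deriv (deriv (f t)) x

/-- Mixed derivative `∂_{xt} f = ∂_t ∂_x f` at `(t, x)`. -/
def pdxt (f : ℝ → ℝ → ℝ) (t x : ℝ) : ℝ := deriv (fun s => deriv (f s) x) t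

/-! ### Squared Sobolev norms on an interval `(0, ℓ)` -/

/-- Square of the `L²(0,ℓ)` norm. -/
def L2sq (ℓ : ℝ) (f : ℝ → ℝ) : ℝ := ∫ x in (0:ℝ)..ℓ, (f x) ^ 2

/-- Square of the `H¹(0,ℓ)` norm. -/
def H1sq (ℓ : ℝ) (f : ℝ → ℝ) : ℝ := L2sq ℓ f + L2sq ℓ (deriv f)

/-- Square of the `H²(0,ℓ)` norm. -/
def H2sq (ℓ : ℝ) (f : ℝ → ℝ) : ℝ := H1sq ℓ f + L2sq ℓ (deriv (deriv f))

/-- `L²(0,ℓ)` norm. -/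
def L2n (ℓ : ℝ) (f : ℝ → ℝ) : ℝ := Real.sqrt (L2sq ℓ f)

/-- `H¹(0,ℓ)` norm. -/
def H1n (ℓ : ℝ) (f : ℝ → ℝ) : ℝ := Real.sqrt (H1sq ℓ f)

/-- `H²(0,ℓ)` norm. -/
def H2n (ℓ : ℝ) (f : ℝ → ℝ) : ℝ := Real.sqrt (H2sq ℓ f)

/-- Supremum of `g` over the time interval `[0, T]`. -/
def supIcc (T : ℝ) (g : ℝ → ℝ) : ℝ := sSup (g '' Set.Icc 0 T)

/-! ### Oriented networks -/

/-- An oriented network with nodes indexed by `P` and arcs indexed by `M`.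
Arc `i` is parametrized by the compact interval `[0, len i]`; `first i`
(resp. `last i`) is the node sitting at the endpoint `x = 0` (resp. `x = len i`)
of the arc, `none` meaning that this endpoint is an outer boundary vertex.
An arc `i` is *incoming* at the node `ν` if `last i = some ν`, and *outgoing*
if `first i = some ν`. -/
structure Network (P M : Type) where
  len : M → ℝ
  len_pos : ∀ i, 0 < len i
  first : M → Option P
  last : M → Option P
  no_loop : ∀ i ν, ¬ (first i = some ν ∧ last i = some ν)

namespace Network

variable {P M : Type} [Fintype P] [Fintype M] [DecidableEq P] [DecidableEq M]

/-- The set `M^ν` of arcs incident to the node `ν`. -/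
def incident (G : Network P M) (ν : P) : Finset M :=
  Finset.univ.filter fun i => G.first i = some ν ∨ G.last i = some ν

/-- Trace at the node `ν` of a family `f` of functions on the arcs. -/
def trace (G : Network P M) (f : M → ℝ → ℝ) (ν : P) (j : M) : ℝ :=
  if G.last j = some ν then f j (G.len j) else f j 0

/-- Transmission conditions at the nodes for the hyperbolic unknowns `(u, v)`,
with transmission coefficients `K ν i j`. -/
def HypNode (G : Network P M) (lam : M → ℝ) (K : P → M → M → ℝ)
    (u v : M → ℝ → ℝ) : Prop :=
  ∀ ν : P,
    (∀ i ∈ G.incident ν, G.last i = some ν →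
      -(lam i * v i (G.len i)) =
        ∑ j ∈ G.incident ν, K ν i j * (G.trace u ν j - G.trace u ν i)) ∧
    (∀ i ∈ G.incident ν, G.first i = some ν →
      lam i * v i 0 =
        ∑ j ∈ G.incident ν, K ν i j * (G.trace u ν j - G.trace u ν i))

/-- Kedem–Katchalsky transmission conditions at the nodes for the parabolic
unknown `φ`, with transmission coefficients `α ν i j`. -/
def ParNode (G : Network P M) (D : M → ℝ) (α : P → M → M → ℝ)
    (φ : M → ℝ → ℝ) : Prop :=
  ∀ ν : P,
    (∀ i ∈ G.incident ν, G.last i = some ν →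
      D i * deriv (φ i) (G.len i) =
        ∑ j ∈ G.incident ν, α ν i j * (G.trace φ ν j - G.trace φ ν i)) ∧
    (∀ i ∈ G.incident ν, G.first i = some ν →
      -(D i * deriv (φ i) 0) =
        ∑ j ∈ G.incident ν, α ν i j * (G.trace φ ν j - G.trace φ ν i))

/-- Null condition for `v` at the outer boundary vertices of the network. -/
def OuterZero (G : Network P M) (v : M → ℝ → ℝ) : Prop :=
  ∀ i, (G.first i = none → v i 0 = 0) ∧ (G.last i = none → v i (G.len i) = 0)

/-- `(u, v, φ)` is a (classical, smooth) solution of the hyperbolic–parabolic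
chemotaxis system on the network `G` for times in the set `S`:
`∂_t u_i + λ_i ∂_x v_i = 0`, `∂_t v_i + λ_i ∂_x u_i = u_i ∂_x φ_i - β_i v_i`,
`∂_t φ_i = D_i ∂_{xx} φ_i + a u_i - b φ_i` on each arc, with null-flux boundary
conditions at the outer vertices and the transmission conditions at the nodes.
Functions are written `u i t x`. -/
structure IsSolution (G : Network P M) (lam beta D : M → ℝ) (a b : ℝ)
    (K α : P → M → M → ℝ) (S : Set ℝ) (u v φ : M → ℝ → ℝ → ℝ) : Prop where
  reg_u : ∀ i, ContDiff ℝ 1 (Function.uncurry (u i))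
  reg_v : ∀ i, ContDiff ℝ 1 (Function.uncurry (v i))
  reg_φ : ∀ i, ContDiff ℝ 2 (Function.uncurry (φ i))
  eq_u : ∀ i, ∀ t ∈ S, ∀ x ∈ Set.Icc 0 (G.len i),
    pdt (u i) t x + lam i * pdx (v i) t x = 0
  eq_v : ∀ i, ∀ t ∈ S, ∀ x ∈ Set.Icc 0 (G.len i),
    pdt (v i) t x + lam i * pdx (u i) t x = u i t x * pdx (φ i) t x - beta i * v i t x
  eq_φ : ∀ i, ∀ t ∈ S, ∀ x ∈ Set.Icc 0 (G.len i),
    pdt (φ i) t x = D i * pdxx (φ i) t x + a * u i t x - b * φ i t x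
  bc_v : ∀ t ∈ S, G.OuterZero fun i => v i t
  bc_φ : ∀ t ∈ S, G.OuterZero fun i => deriv (φ i t)
  node_uv : ∀ t ∈ S, G.HypNode lam K (fun i => u i t) fun i => v i t
  node_φ : ∀ t ∈ S, G.ParNode D α fun i => φ i t

end Network

end

/-! ### Auxiliary lemmas -/

section Aux

open Finset intervalIntegral MeasureTheory

lemma pdt_eq_fderiv {f : ℝ → ℝ → ℝ} (hf : Differentiable ℝ (Function.uncurry f))
    (t x : ℝ) : pdt f t x = fderiv ℝ (Function.uncurry f) (t, x) (1, 0) := by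
  have h1 : HasDerivAt (fun s : ℝ => (s, x)) ((1 : ℝ), (0 : ℝ)) t :=
    (hasDerivAt_id t).prodMk (hasDerivAt_const t x)
  have h2 : HasDerivAt (fun s => f s x) (fderiv ℝ (Function.uncurry f) (t, x) (1, 0)) t := by
    have := ((hf (t, x)).hasFDerivAt).comp_hasDerivAt t h1
    exact this
  exact h2.deriv

lemma continuous_pdt {f : ℝ → ℝ → ℝ} (hf : ContDiff ℝ 2 (Function.uncurry f)) :
    Continuous fun p : ℝ × ℝ => pdt f p.1 p.2 := by
  have hd : Differentiable ℝ (Function.uncurry f) := hf.differentiable (by norm_num)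
  have hc : Continuous fun p : ℝ × ℝ => fderiv ℝ (Function.uncurry f) p :=
    (hf.fderiv_right (m := 1) (by norm_num)).continuous
  have : Continuous fun p : ℝ × ℝ => fderiv ℝ (Function.uncurry f) p ((1 : ℝ), (0 : ℝ)) :=
    hc.clm_apply continuous_const
  refine this.congr fun p => ?_
  exact (pdt_eq_fderiv hd p.1 p.2).symm

lemma contDiff_section {n : ℕ∞} {f : ℝ → ℝ → ℝ} (hf : ContDiff ℝ n (Function.uncurry f))
    (t : ℝ) : ContDiff ℝ n (f t) := by
  have : ContDiff ℝ n fun x : ℝ => (t, x) := contDiff_const.prodMk contDiff_id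
  exact hf.comp this

lemma sym_sum_nonpos {M : Type*} (s : Finset M) (A : M → M → ℝ)
    (hsym : ∀ i j, A i j = A j i) (hnn : ∀ i j, 0 ≤ A i j) (x : M → ℝ) :
    ∑ i ∈ s, (∑ j ∈ s, A i j * (x j - x i)) * x i ≤ 0 := by
  have key : (2 : ℝ) * ∑ i ∈ s, (∑ j ∈ s, A i j * (x j - x i)) * x i
      = - ∑ i ∈ s, ∑ j ∈ s, A i j * (x j - x i) ^ 2 := by
    have h1 : ∑ i ∈ s, (∑ j ∈ s, A i j * (x j - x i)) * x i
        = ∑ i ∈ s, ∑ j ∈ s, A i j * (x j - x i) * x i := by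
      refine Finset.sum_congr rfl fun i _ => ?_
      rw [Finset.sum_mul]
    have h2 : ∑ i ∈ s, ∑ j ∈ s, A i j * (x j - x i) * x i
        = ∑ i ∈ s, ∑ j ∈ s, A i j * (x i - x j) * x j := by
      rw [Finset.sum_comm]
      exact Finset.sum_congr rfl fun i _ => Finset.sum_congr rfl fun j _ => by rw [hsym]
    rw [h1]
    calc (2:ℝ) * ∑ i ∈ s, ∑ j ∈ s, A i j * (x j - x i) * x i
        = (∑ i ∈ s, ∑ j ∈ s, A i j * (x j - x i) * x i)
          + ∑ i ∈ s, ∑ j ∈ s, A i j * (x i - x j) * x j := by rw [← h2]; ring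
      _ = ∑ i ∈ s, ∑ j ∈ s, (A i j * (x j - x i) * x i + A i j * (x i - x j) * x j) := by
          rw [← Finset.sum_add_distrib]
          exact Finset.sum_congr rfl fun i _ => (Finset.sum_add_distrib).symm
      _ = ∑ i ∈ s, ∑ j ∈ s, -(A i j * (x j - x i) ^ 2) :=
          Finset.sum_congr rfl fun i _ => Finset.sum_congr rfl fun j _ => by ring
      _ = - ∑ i ∈ s, ∑ j ∈ s, A i j * (x j - x i) ^ 2 := by
          simp [Finset.sum_neg_distrib]
  have hnn' : 0 ≤ ∑ i ∈ s, ∑ j ∈ s, A i j * (x j - x i) ^ 2 :=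
    Finset.sum_nonneg fun i _ => Finset.sum_nonneg fun j _ =>
      mul_nonneg (hnn i j) (sq_nonneg _)
  nlinarith [key]

namespace Network

variable {P M : Type} [Fintype P] [Fintype M] [DecidableEq P] [DecidableEq M]

lemma boundary_sum_nonpos (G : Network P M) (D : M → ℝ) (α : P → M → M → ℝ)
    (hαsym : ∀ ν i j, α ν i j = α ν j i) (hαnn : ∀ ν i j, 0 ≤ α ν i j)
    (ψ : M → ℝ → ℝ)
    (hbc : G.OuterZero fun i => deriv (ψ i))
    (hnode : G.ParNode D α ψ) :
    ∑ i, (D i * deriv (ψ i) (G.len i) * ψ i (G.len i)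
          - D i * deriv (ψ i) 0 * ψ i 0) ≤ 0 := by
  set g : P → M → ℝ := fun ν i =>
    (∑ j ∈ G.incident ν, α ν i j * (G.trace ψ ν j - G.trace ψ ν i)) * G.trace ψ ν i with hg
  have hlast : ∀ i, D i * deriv (ψ i) (G.len i) * ψ i (G.len i)
      = ∑ ν, if G.last i = some ν then g ν i else 0 := by
    intro i
    cases hl : G.last i with
    | none =>
      have h0 : deriv (ψ i) (G.len i) = 0 := (hbc i).2 hl
      rw [h0]
      simp [hl]
    | some ν =>
      have hmem : i ∈ G.incident ν :=
        Finset.mem_filter.mpr ⟨Finset.mem_univ i, Or.inr hl⟩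
      have hnd := (hnode ν).1 i hmem hl
      have htr : G.trace ψ ν i = ψ i (G.len i) := by simp [Network.trace, hl]
      have hsum : (∑ ν' : P, if (some ν : Option P) = some ν' then g ν' i else 0) = g ν i := by
        simp
      rw [hsum]; simp only [hg]; rw [← hnd, htr]
  have hfirst : ∀ i, -(D i * deriv (ψ i) 0 * ψ i 0)
      = ∑ ν, if G.first i = some ν then g ν i else 0 := by
    intro i
    cases hl : G.first i with
    | none =>
      have h0 : deriv (ψ i) 0 = 0 := (hbc i).1 hl
      rw [h0]
      simp [hl]
    | some ν =>
      have hmem : i ∈ G.incident ν :=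
        Finset.mem_filter.mpr ⟨Finset.mem_univ i, Or.inl hl⟩
      have hnd := (hnode ν).2 i hmem hl
      have hne : ¬ (G.last i = some ν) := fun h => G.no_loop i ν ⟨hl, h⟩
      have htr : G.trace ψ ν i = ψ i 0 := by simp [Network.trace, hne]
      have hsum : (∑ ν' : P, if (some ν : Option P) = some ν' then g ν' i else 0) = g ν i := by
        simp
      rw [hsum]; simp only [hg]; rw [← hnd, htr]
      ring
  calc ∑ i, (D i * deriv (ψ i) (G.len i) * ψ i (G.len i) - D i * deriv (ψ i) 0 * ψ i 0)
      = ∑ i, ((∑ ν, if G.last i = some ν then g ν i else 0)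
            + (∑ ν, if G.first i = some ν then g ν i else 0)) := by
        refine Finset.sum_congr rfl fun i _ => ?_
        rw [← hlast i, ← hfirst i]
        ring
    _ = ∑ i, ∑ ν, ((if G.last i = some ν then g ν i else 0)
            + (if G.first i = some ν then g ν i else 0)) :=
        Finset.sum_congr rfl fun i _ => (Finset.sum_add_distrib).symm
    _ = ∑ ν, ∑ i, ((if G.last i = some ν then g ν i else 0)
            + (if G.first i = some ν then g ν i else 0)) := Finset.sum_comm
    _ = ∑ ν, ∑ i ∈ G.incident ν, g ν i := by
        refine Finset.sum_congr rfl fun ν _ => ?_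
        rw [Network.incident, Finset.sum_filter]
        refine Finset.sum_congr rfl fun i _ => ?_
        by_cases h1 : G.first i = some ν <;> by_cases h2 : G.last i = some ν
        · exact absurd ⟨h1, h2⟩ (G.no_loop i ν)
        all_goals simp [h1, h2]
    _ ≤ 0 := Finset.sum_nonpos fun ν _ =>
        sym_sum_nonpos (G.incident ν) (α ν) (fun i j => hαsym ν i j)
          (fun i j => hαnn ν i j) (G.trace ψ ν)

end Network

lemma L2sq_nonneg {ℓ : ℝ} (hℓ : 0 ≤ ℓ) (f : ℝ → ℝ) : 0 ≤ L2sq ℓ f :=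
  intervalIntegral.integral_nonneg hℓ fun _ _ => sq_nonneg _

namespace Network

variable {P M : Type} [Fintype P] [Fintype M] [DecidableEq P] [DecidableEq M]

lemma energy_estimate (G : Network P M) (D : M → ℝ) (b : ℝ) (α : P → M → M → ℝ)
    (hD : ∀ i, 0 < D i) (hb : 0 < b)
    (hαsym : ∀ ν i j, α ν i j = α ν j i) (hαnn : ∀ ν i j, 0 ≤ α ν i j)
    (ψ h : M → ℝ → ℝ)
    (hreg : ∀ i, ContDiff ℝ 2 (ψ i))
    (hcont : ∀ i, Continuous (h i))
    (hode : ∀ i, ∀ x ∈ Set.Icc 0 (G.len i),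
      D i * deriv (deriv (ψ i)) x = h i x + b * ψ i x)
    (hbc : G.OuterZero fun i => deriv (ψ i))
    (hnode : G.ParNode D α ψ) (i : M) :
    L2sq (G.len i) (deriv (deriv (ψ i))) + L2sq (G.len i) (deriv (ψ i))
      ≤ (4 / (D i) ^ 2 + 1 / (2 * b * D i)) * ∑ j, L2sq (G.len j) (h j) := by
  -- regularity facts
  have hℓ : ∀ j, (0:ℝ) ≤ G.len j := fun j => (G.len_pos j).le
  have hψd : ∀ j, Differentiable ℝ (ψ j) := fun j => (hreg j).differentiable (by norm_num)
  have hψ'c1 : ∀ j, ContDiff ℝ 1 (deriv (ψ j)) := by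
    intro j
    have h2 : ContDiff ℝ ((1:WithTop ℕ∞) + 1) (ψ j) := by
      have := hreg j
      norm_num at this ⊢
      exact this
    exact (contDiff_succ_iff_deriv.mp h2).2.2
  have hψ'd : ∀ j, Differentiable ℝ (deriv (ψ j)) := fun j => (hψ'c1 j).differentiable (by norm_num)
  have cψ : ∀ j, Continuous (ψ j) := fun j => (hψd j).continuous
  have cψ' : ∀ j, Continuous (deriv (ψ j)) := fun j => (hψ'd j).continuous
  have cψ'' : ∀ j, Continuous (deriv (deriv (ψ j))) := fun j =>
    (contDiff_one_iff_deriv.mp (hψ'c1 j)).2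
  -- the main identity on each arc
  have main : ∀ j, (∫ x in (0:ℝ)..(G.len j), h j x * ψ j x)
      + b * L2sq (G.len j) (ψ j) + D j * L2sq (G.len j) (deriv (ψ j))
      = D j * deriv (ψ j) (G.len j) * ψ j (G.len j) - D j * deriv (ψ j) 0 * ψ j 0 := by
    intro j
    have huIcc : Set.uIcc (0:ℝ) (G.len j) = Set.Icc 0 (G.len j) := Set.uIcc_of_le (hℓ j)
    have e1 : (∫ x in (0:ℝ)..(G.len j), (h j x * ψ j x + b * (ψ j x) ^ 2))
        = ∫ x in (0:ℝ)..(G.len j), (D j * deriv (deriv (ψ j)) x) * ψ j x := by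
      refine intervalIntegral.integral_congr fun x hx => ?_
      rw [huIcc] at hx
      rw [hode j x hx]
      ring
    have e2 : (∫ x in (0:ℝ)..(G.len j), (h j x * ψ j x + b * (ψ j x) ^ 2))
        = (∫ x in (0:ℝ)..(G.len j), h j x * ψ j x) + b * L2sq (G.len j) (ψ j) := by
      rw [intervalIntegral.integral_add (f := fun x => h j x * ψ j x) (g := fun x => b * ψ j x ^ 2) (((hcont j).mul (cψ j)).intervalIntegrable 0 _)
        ((continuous_const.mul ((cψ j).pow 2)).intervalIntegrable 0 _),
        intervalIntegral.integral_const_mul]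
      rfl
    have e3 : (∫ x in (0:ℝ)..(G.len j), (D j * deriv (deriv (ψ j)) x) * ψ j x)
        = D j * ∫ x in (0:ℝ)..(G.len j), ψ j x * deriv (deriv (ψ j)) x := by
      rw [← intervalIntegral.integral_const_mul]
      exact intervalIntegral.integral_congr fun x _ => by ring
    have e4 : (∫ x in (0:ℝ)..(G.len j), ψ j x * deriv (deriv (ψ j)) x)
        = ψ j (G.len j) * deriv (ψ j) (G.len j) - ψ j 0 * deriv (ψ j) 0
          - ∫ x in (0:ℝ)..(G.len j), deriv (ψ j) x * deriv (ψ j) x :=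
      intervalIntegral.integral_mul_deriv_eq_deriv_mul
        (fun x _ => (hψd j x).hasDerivAt) (fun x _ => (hψ'd j x).hasDerivAt)
        ((cψ' j).intervalIntegrable 0 _) ((cψ'' j).intervalIntegrable 0 _)
    have e5 : (∫ x in (0:ℝ)..(G.len j), deriv (ψ j) x * deriv (ψ j) x)
        = L2sq (G.len j) (deriv (ψ j)) :=
      intervalIntegral.integral_congr fun x _ => (sq (deriv (ψ j) x)) ▸ by ring
    have echain : (∫ x in (0:ℝ)..(G.len j), h j x * ψ j x) + b * L2sq (G.len j) (ψ j)
        = D j * (ψ j (G.len j) * deriv (ψ j) (G.len j) - ψ j 0 * deriv (ψ j) 0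
            - L2sq (G.len j) (deriv (ψ j))) := by
      rw [← e2, e1, e3, e4, e5]
    linear_combination echain
  -- boundary sum is nonpositive
  have hB := G.boundary_sum_nonpos D α hαsym hαnn ψ hbc hnode
  have hsum1 : ∑ j, ((∫ x in (0:ℝ)..(G.len j), h j x * ψ j x)
      + b * L2sq (G.len j) (ψ j) + D j * L2sq (G.len j) (deriv (ψ j))) ≤ 0 :=
    (Finset.sum_congr rfl fun j _ => main j).le.trans hB
  -- Young's inequality on each arc
  have young : ∀ j, -(∫ x in (0:ℝ)..(G.len j), h j x * ψ j x)
      ≤ 1 / (2 * b) * L2sq (G.len j) (h j) + b / 2 * L2sq (G.len j) (ψ j) := by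
    intro j
    have eneg : -(∫ x in (0:ℝ)..(G.len j), h j x * ψ j x)
        = ∫ x in (0:ℝ)..(G.len j), -(h j x * ψ j x) := by
      rw [intervalIntegral.integral_neg]
    have emono : (∫ x in (0:ℝ)..(G.len j), -(h j x * ψ j x))
        ≤ ∫ x in (0:ℝ)..(G.len j),
            (1 / (2 * b) * (h j x) ^ 2 + b / 2 * (ψ j x) ^ 2) := by
      refine intervalIntegral.integral_mono_on (hℓ j)
        (((hcont j).mul (cψ j)).neg.intervalIntegrable 0 _)
        (((continuous_const.mul ((hcont j).pow 2)).add
          (continuous_const.mul ((cψ j).pow 2))).intervalIntegrable 0 _)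
        fun x _ => ?_
      have h1 : (0:ℝ) ≤ (h j x + b * ψ j x) ^ 2 := sq_nonneg _
      have h2 : (0:ℝ) < b := hb
      rw [div_mul_eq_mul_div, div_mul_eq_mul_div, ← sub_nonneg]
      have key : 1 * (h j x) ^ 2 / (2 * b) + b * (ψ j x) ^ 2 / 2 - -(h j x * ψ j x)
          = (h j x + b * ψ j x) ^ 2 / (2 * b) := by field_simp; ring
      rw [key]
      positivity
    have esplit : (∫ x in (0:ℝ)..(G.len j),
          (1 / (2 * b) * (h j x) ^ 2 + b / 2 * (ψ j x) ^ 2))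
        = 1 / (2 * b) * L2sq (G.len j) (h j) + b / 2 * L2sq (G.len j) (ψ j) := by
      rw [intervalIntegral.integral_add (f := fun x => 1 / (2 * b) * h j x ^ 2) (g := fun x => b / 2 * ψ j x ^ 2)
        ((continuous_const.mul ((hcont j).pow 2)).intervalIntegrable 0 _)
        ((continuous_const.mul ((cψ j).pow 2)).intervalIntegrable 0 _),
        intervalIntegral.integral_const_mul, intervalIntegral.integral_const_mul]
      rfl
    rw [eneg, ← esplit]
    exact emono
  set H := ∑ j, L2sq (G.len j) (h j) with hH
  have hHnn : 0 ≤ H := Finset.sum_nonneg fun j _ => L2sq_nonneg (hℓ j) _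
  -- summed coercive estimate
  have hsum2 : ∑ j, (D j * L2sq (G.len j) (deriv (ψ j)) + b / 2 * L2sq (G.len j) (ψ j))
      ≤ 1 / (2 * b) * H := by
    calc ∑ j, (D j * L2sq (G.len j) (deriv (ψ j)) + b / 2 * L2sq (G.len j) (ψ j))
        ≤ ∑ j, (((∫ x in (0:ℝ)..(G.len j), h j x * ψ j x)
            + b * L2sq (G.len j) (ψ j) + D j * L2sq (G.len j) (deriv (ψ j)))
            + 1 / (2 * b) * L2sq (G.len j) (h j)) :=
          Finset.sum_le_sum fun j _ => by linarith [young j]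
      _ = (∑ j, ((∫ x in (0:ℝ)..(G.len j), h j x * ψ j x)
            + b * L2sq (G.len j) (ψ j) + D j * L2sq (G.len j) (deriv (ψ j))))
            + 1 / (2 * b) * H := by
          rw [Finset.sum_add_distrib, Finset.mul_sum]
      _ ≤ 1 / (2 * b) * H := by linarith [hsum1]
  -- extract single-arc bounds
  have hterm : D i * L2sq (G.len i) (deriv (ψ i)) + b / 2 * L2sq (G.len i) (ψ i)
      ≤ 1 / (2 * b) * H := by
    refine le_trans (Finset.single_le_sum (f := fun j =>
      D j * L2sq (G.len j) (deriv (ψ j)) + b / 2 * L2sq (G.len j) (ψ j))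
      (fun j _ => ?_) (Finset.mem_univ i)) hsum2
    have h1 := L2sq_nonneg (hℓ j) (deriv (ψ j))
    have h2 := L2sq_nonneg (hℓ j) (ψ j)
    have h3 := hD j
    nlinarith
  have hterm' : 2 * b * (D i * L2sq (G.len i) (deriv (ψ i))
      + b / 2 * L2sq (G.len i) (ψ i)) ≤ H := by
    have e : 2 * b * (1 / (2 * b) * H) = H := by field_simp
    have := mul_le_mul_of_nonneg_left hterm (by positivity : (0:ℝ) ≤ 2 * b)
    rwa [e] at this
  have hAnn := L2sq_nonneg (hℓ i) (deriv (ψ i))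
  have hBnn := L2sq_nonneg (hℓ i) (ψ i)
  have hA : L2sq (G.len i) (deriv (ψ i)) ≤ 1 / (2 * b * D i) * H := by
    rw [show (1 / (2 * b * D i)) * H = H / (2 * b * D i) by ring,
      le_div_iff₀ (mul_pos (by linarith : (0:ℝ) < 2 * b) (hD i))]
    nlinarith [hterm', mul_nonneg (mul_nonneg hb.le hb.le) hBnn]
  have hBψ : L2sq (G.len i) (ψ i) ≤ 1 / b ^ 2 * H := by
    rw [show (1 / b ^ 2) * H = H / b ^ 2 by ring, le_div_iff₀ (pow_pos hb 2)]
    nlinarith [hterm', mul_nonneg (mul_nonneg (by positivity : (0:ℝ) ≤ 2 * b) (hD i).le) hAnn]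
  -- second-derivative bound
  have hL2h : L2sq (G.len i) (h i) ≤ H :=
    Finset.single_le_sum (f := fun j => L2sq (G.len j) (h j))
      (fun j _ => L2sq_nonneg (hℓ j) _) (Finset.mem_univ i)
  have hC : L2sq (G.len i) (deriv (deriv (ψ i)))
      ≤ (2 * L2sq (G.len i) (h i) + 2 * b ^ 2 * L2sq (G.len i) (ψ i)) / (D i) ^ 2 := by
    have hmono : L2sq (G.len i) (deriv (deriv (ψ i)))
        ≤ ∫ x in (0:ℝ)..(G.len i),
            (2 * (h i x) ^ 2 + 2 * b ^ 2 * (ψ i x) ^ 2) / (D i) ^ 2 := by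
      refine intervalIntegral.integral_mono_on (hℓ i)
        (((cψ'' i).pow 2).intervalIntegrable 0 _)
        ((((continuous_const.mul ((hcont i).pow 2)).add
          (continuous_const.mul ((cψ i).pow 2))).div_const _).intervalIntegrable 0 _)
        fun x hx => ?_
      rw [le_div_iff₀ (pow_pos (hD i) 2)]
      have heq := hode i x hx
      have key : (D i * deriv (deriv (ψ i)) x) ^ 2 = (h i x + b * ψ i x) ^ 2 := by
        rw [heq]
      nlinarith [key, sq_nonneg (h i x - b * ψ i x)]
    have hsplit : (∫ x in (0:ℝ)..(G.len i),
          (2 * (h i x) ^ 2 + 2 * b ^ 2 * (ψ i x) ^ 2) / (D i) ^ 2)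
        = (2 * L2sq (G.len i) (h i) + 2 * b ^ 2 * L2sq (G.len i) (ψ i)) / (D i) ^ 2 := by
      rw [intervalIntegral.integral_div, intervalIntegral.integral_add (f := fun x => 2 * h i x ^ 2) (g := fun x => 2 * b ^ 2 * ψ i x ^ 2)
        ((continuous_const.mul ((hcont i).pow 2)).intervalIntegrable 0 _)
        ((continuous_const.mul ((cψ i).pow 2)).intervalIntegrable 0 _),
        intervalIntegral.integral_const_mul, intervalIntegral.integral_const_mul]
      rfl
    rwa [hsplit] at hmono
  have hC2 : (2 * L2sq (G.len i) (h i) + 2 * b ^ 2 * L2sq (G.len i) (ψ i)) / (D i) ^ 2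
      ≤ (2 * H + 2 * b ^ 2 * (1 / b ^ 2 * H)) / (D i) ^ 2 := by
    gcongr
  have hfin : (2 * H + 2 * b ^ 2 * (1 / b ^ 2 * H)) / (D i) ^ 2 = 4 / (D i) ^ 2 * H := by
    have hb0 : b ≠ 0 := ne_of_gt hb
    have e : 2 * b ^ 2 * (1 / b ^ 2 * H) = 2 * H := by
      field_simp
    rw [e]
    ring
  have := hC.trans (hC2.trans_eq hfin)
  linarith [hA, this]


end Network

end Aux

/-- **A priori estimate for `∂_{xx} φ` and `∂_x φ` (Proposition 5.7).**
For any local (classical) solution of the chemotaxis system on the network `G`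
on `[0, T]`:
`∑_i ( sup ‖∂_{xx} φ_i‖₂² + sup ‖∂_x φ_i‖₂² )
 ≤ C ∑_i ( sup ‖∂_t φ_i‖₂² + sup ‖u_i‖₂² )`,
where `C > 0` depends only on the parameters of the problem. -/
theorem apriori_phixx_estimate
    {P M : Type} [Fintype P] [Fintype M] [DecidableEq P] [DecidableEq M]
    (G : Network P M) (lam beta D : M → ℝ) (a b : ℝ) (K α : P → M → M → ℝ)
    (hlam : ∀ i, 0 ≤ lam i) (hbeta : ∀ i, 0 < beta i) (hD : ∀ i, 0 < D i)
    (ha : 0 ≤ a) (hb : 0 < b)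
    (hKsym : ∀ ν i j, K ν i j = K ν j i) (hKnn : ∀ ν i j, 0 ≤ K ν i j)
    (hαsym : ∀ ν i j, α ν i j = α ν j i) (hαnn : ∀ ν i j, 0 ≤ α ν i j)
    :
    ∃ C > 0, ∀ T > 0, ∀ u v φ : M → ℝ → ℝ → ℝ,
      G.IsSolution lam beta D a b K α (Set.Icc 0 T) u v φ →
      ∑ i, (supIcc T (fun t => L2sq (G.len i) (deriv (deriv (φ i t))))
          + supIcc T (fun t => L2sq (G.len i) (deriv (φ i t)))) ≤
      C * ∑ i, (supIcc T (fun t => L2sq (G.len i) (fun x => pdt (φ i) t x))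
          + supIcc T (fun t => L2sq (G.len i) (u i t))) := by
  classical
  set c : M → ℝ := fun i => 4 / (D i) ^ 2 + 1 / (2 * b * D i) with hc
  have hcnn : ∀ i, 0 ≤ c i := by
    intro i
    have h1 := hD i
    have h2 := hb
    positivity
  set S : ℝ := ∑ i, c i with hS
  have hSnn : 0 ≤ S := Finset.sum_nonneg fun i _ => hcnn i
  refine ⟨2 * (2 + 2 * a ^ 2) * (S + 1) + 1, by positivity, ?_⟩
  intro T hT u v φ sol
  have hℓ : ∀ j, (0:ℝ) ≤ G.len j := fun j => (G.len_pos j).le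
  -- continuity in time of the right-hand side quantities
  have contP : ∀ j, Continuous fun t => L2sq (G.len j) (fun x => pdt (φ j) t x) := by
    intro j
    have hpc : Continuous (Function.uncurry fun t x => (pdt (φ j) t x) ^ 2) := by
      have := (continuous_pdt (sol.reg_φ j)).pow 2
      exact this
    have := intervalIntegral.continuous_parametric_intervalIntegral_of_continuous'
      (μ := MeasureTheory.volume) (f := fun t x => (pdt (φ j) t x) ^ 2) hpc 0 (G.len j)
    simpa [L2sq] using this
  have contU : ∀ j, Continuous fun t => L2sq (G.len j) (u j t) := by
    intro j
    have hpc : Continuous (Function.uncurry fun t x => (u j t x) ^ 2) := by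
      have := ((sol.reg_u j).continuous).pow 2
      exact this
    have := intervalIntegral.continuous_parametric_intervalIntegral_of_continuous'
      (μ := MeasureTheory.volume) (f := fun t x => (u j t x) ^ 2) hpc 0 (G.len j)
    simpa [L2sq] using this
  set sP : M → ℝ := fun j => supIcc T (fun t => L2sq (G.len j) (fun x => pdt (φ j) t x)) with hsP
  set sU : M → ℝ := fun j => supIcc T (fun t => L2sq (G.len j) (u j t)) with hsU
  have hsPnn : ∀ j, 0 ≤ sP j := fun j => Real.sSup_nonneg (by
    rintro y ⟨t, _, rfl⟩; exact L2sq_nonneg (hℓ j) _)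
  have hsUnn : ∀ j, 0 ≤ sU j := fun j => Real.sSup_nonneg (by
    rintro y ⟨t, _, rfl⟩; exact L2sq_nonneg (hℓ j) _)
  have hPle : ∀ j, ∀ t ∈ Set.Icc (0:ℝ) T,
      L2sq (G.len j) (fun x => pdt (φ j) t x) ≤ sP j := fun j t ht =>
    le_csSup (isCompact_Icc.image (contP j)).bddAbove ⟨t, ht, rfl⟩
  have hUle : ∀ j, ∀ t ∈ Set.Icc (0:ℝ) T,
      L2sq (G.len j) (u j t) ≤ sU j := fun j t ht =>
    le_csSup (isCompact_Icc.image (contU j)).bddAbove ⟨t, ht, rfl⟩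
  set R : ℝ := ∑ i, (sP i + sU i) with hR
  have hRnn : 0 ≤ R := Finset.sum_nonneg fun i _ => add_nonneg (hsPnn i) (hsUnn i)
  -- pointwise-in-time estimate
  have key : ∀ t ∈ Set.Icc (0:ℝ) T, ∀ i : M,
      L2sq (G.len i) (deriv (deriv (φ i t))) + L2sq (G.len i) (deriv (φ i t))
        ≤ c i * ((2 + 2 * a ^ 2) * R) := by
    intro t ht i
    set h : M → ℝ → ℝ := fun j x => pdt (φ j) t x - a * u j t x with hh
    have hcont : ∀ j, Continuous (h j) := by
      intro j
      have h1 : Continuous fun x => pdt (φ j) t x :=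
        (continuous_pdt (sol.reg_φ j)).comp (continuous_const.prodMk continuous_id)
      have h2 : Continuous fun x => u j t x :=
        ((sol.reg_u j).continuous).comp (continuous_const.prodMk continuous_id)
      exact h1.sub (continuous_const.mul h2)
    have henergy := G.energy_estimate D b α hD hb hαsym hαnn (fun j => φ j t) h
      (fun j => contDiff_section (sol.reg_φ j) t) hcont
      (by
        intro j x hx
        have := sol.eq_φ j t ht x hx
        unfold pdxx at this
        simp only [hh]
        linarith)
      (sol.bc_φ t ht) (sol.node_φ t ht) i
    have hhj : ∀ j, L2sq (G.len j) (h j) ≤ 2 * sP j + 2 * a ^ 2 * sU j := by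
      intro j
      have hmono : L2sq (G.len j) (h j)
          ≤ ∫ x in (0:ℝ)..(G.len j),
              (2 * (pdt (φ j) t x) ^ 2 + 2 * a ^ 2 * (u j t x) ^ 2) := by
        have h1 : Continuous fun x => pdt (φ j) t x :=
          (continuous_pdt (sol.reg_φ j)).comp (continuous_const.prodMk continuous_id)
        have h2 : Continuous fun x => u j t x :=
          ((sol.reg_u j).continuous).comp (continuous_const.prodMk continuous_id)
        refine intervalIntegral.integral_mono_on (hℓ j)
          (((hcont j).pow 2).intervalIntegrable 0 _)
          (((continuous_const.mul (h1.pow 2)).add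
            (continuous_const.mul (h2.pow 2))).intervalIntegrable 0 _)
          fun x _ => ?_
        simp only [hh]
        nlinarith [sq_nonneg (pdt (φ j) t x + a * u j t x)]
      have hsplit : (∫ x in (0:ℝ)..(G.len j),
            (2 * (pdt (φ j) t x) ^ 2 + 2 * a ^ 2 * (u j t x) ^ 2))
          = 2 * L2sq (G.len j) (fun x => pdt (φ j) t x) + 2 * a ^ 2 * L2sq (G.len j) (u j t) := by
        have h1 : Continuous fun x => pdt (φ j) t x :=
          (continuous_pdt (sol.reg_φ j)).comp (continuous_const.prodMk continuous_id)
        have h2 : Continuous fun x => u j t x :=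
          ((sol.reg_u j).continuous).comp (continuous_const.prodMk continuous_id)
        rw [intervalIntegral.integral_add (f := fun x => 2 * pdt (φ j) t x ^ 2) (g := fun x => 2 * a ^ 2 * u j t x ^ 2)
          ((continuous_const.mul (h1.pow 2)).intervalIntegrable 0 _)
          ((continuous_const.mul (h2.pow 2)).intervalIntegrable 0 _),
          intervalIntegral.integral_const_mul, intervalIntegral.integral_const_mul]
        rfl
      rw [hsplit] at hmono
      have := hPle j t ht
      have := hUle j t ht
      nlinarith [sq_nonneg a]
    have hHle : ∑ j, L2sq (G.len j) (h j) ≤ (2 + 2 * a ^ 2) * R := by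
      calc ∑ j, L2sq (G.len j) (h j) ≤ ∑ j, (2 * sP j + 2 * a ^ 2 * sU j) :=
            Finset.sum_le_sum fun j _ => hhj j
        _ ≤ ∑ j, ((2 + 2 * a ^ 2) * (sP j + sU j)) := by
            refine Finset.sum_le_sum fun j _ => ?_
            nlinarith [hsPnn j, hsUnn j, sq_nonneg a,
              mul_nonneg (sq_nonneg a) (hsPnn j), mul_nonneg (sq_nonneg a) (hsUnn j)]
        _ = (2 + 2 * a ^ 2) * R := by rw [hR, Finset.mul_sum]
    calc L2sq (G.len i) (deriv (deriv (φ i t))) + L2sq (G.len i) (deriv (φ i t))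
        ≤ c i * ∑ j, L2sq (G.len j) (h j) := henergy
      _ ≤ c i * ((2 + 2 * a ^ 2) * R) := by
          exact mul_le_mul_of_nonneg_left hHle (hcnn i)
  -- take suprema
  have hsup : ∀ i : M,
      supIcc T (fun t => L2sq (G.len i) (deriv (deriv (φ i t))))
      + supIcc T (fun t => L2sq (G.len i) (deriv (φ i t)))
      ≤ 2 * (c i * ((2 + 2 * a ^ 2) * R)) := by
    intro i
    have hbound : (0:ℝ) ≤ c i * ((2 + 2 * a ^ 2) * R) := by
      have := hcnn i
      have := hRnn
      positivity
    have h1 : supIcc T (fun t => L2sq (G.len i) (deriv (deriv (φ i t))))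
        ≤ c i * ((2 + 2 * a ^ 2) * R) := by
      refine Real.sSup_le ?_ hbound
      rintro y ⟨t, ht, rfl⟩
      have := key t ht i
      have := L2sq_nonneg (hℓ i) (deriv (φ i t))
      linarith
    have h2 : supIcc T (fun t => L2sq (G.len i) (deriv (φ i t)))
        ≤ c i * ((2 + 2 * a ^ 2) * R) := by
      refine Real.sSup_le ?_ hbound
      rintro y ⟨t, ht, rfl⟩
      have := key t ht i
      have := L2sq_nonneg (hℓ i) (deriv (deriv (φ i t)))
      linarith
    linarith
  calc ∑ i, (supIcc T (fun t => L2sq (G.len i) (deriv (deriv (φ i t))))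
        + supIcc T (fun t => L2sq (G.len i) (deriv (φ i t))))
      ≤ ∑ i, 2 * (c i * ((2 + 2 * a ^ 2) * R)) := Finset.sum_le_sum fun i _ => hsup i
    _ = S * (2 * ((2 + 2 * a ^ 2) * R)) := by
        rw [hS, Finset.sum_mul]
        exact Finset.sum_congr rfl fun i _ => by ring
    _ ≤ (2 * (2 + 2 * a ^ 2) * (S + 1) + 1) * R := by
        nlinarith [hRnn, hSnn, sq_nonneg a, mul_nonneg (sq_nonneg a) hRnn,
          mul_nonneg hSnn hRnn, mul_nonneg (mul_nonneg (sq_nonneg a) hSnn) hRnn]
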